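/- The function f₁(θ) = (θ/sin θ + cos θ - π/2)/cos²θ is monotonically increasing on (0, π/2). -/

import Mathlib

open Real

noncomputable def kAux (θ : ℝ) : ℝ := 4 * Real.sin θ * Real.cos θ + 6 * θ - 3 * π * Real.sin θ

noncomputable def hAux (θ : ℝ) : ℝ :=
  Real.sin θ * Real.cos θ * (1 + Real.sin θ ^ 2) + θ * (3 * Real.sin θ ^ 2 - 1) - π * Real.sin θ ^ 3

noncomputable def c0 : ℝ := Real.arccos (3 * π / 16)

lemma kAux_hasDerivAt (θ : ℝ) :
    HasDerivAt kAux (4 * (Real.cos θ ^ 2 - Real.sin θ ^ 2) + 6 - 3 * π * Real.cos θ) θ := by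
  have h : HasDerivAt (fun x : ℝ => 4 * Real.sin x * Real.cos x + 6 * x - 3 * π * Real.sin x)
      (4 * (Real.cos θ * Real.cos θ + Real.sin θ * (-Real.sin θ)) + 6 * 1 - 3 * π * Real.cos θ) θ := by
    have h1 : HasDerivAt (fun x : ℝ => Real.sin x * Real.cos x)
        (Real.cos θ * Real.cos θ + Real.sin θ * (-Real.sin θ)) θ :=
      (Real.hasDerivAt_sin θ).mul (Real.hasDerivAt_cos θ)
    have h2 : HasDerivAt (fun x : ℝ => 4 * (Real.sin x * Real.cos x))
        (4 * (Real.cos θ * Real.cos θ + Real.sin θ * (-Real.sin θ))) θ := h1.const_mul 4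
    have h3 : HasDerivAt (fun x : ℝ => (6:ℝ) * x) (6 * 1) θ := (hasDerivAt_id θ).const_mul 6
    have h4 : HasDerivAt (fun x : ℝ => 3 * π * Real.sin x) (3 * π * Real.cos θ) θ :=
      (Real.hasDerivAt_sin θ).const_mul (3 * π)
    have := (h2.add h3).sub h4
    have e : (fun x : ℝ => 4 * Real.sin x * Real.cos x + 6 * x - 3 * π * Real.sin x) =
        ((fun x : ℝ => 4 * (Real.sin x * Real.cos x)) + fun x : ℝ => 6 * x) - fun x : ℝ => 3 * π * Real.sin x := by
      funext x; simp only [Pi.add_apply, Pi.sub_apply]; ring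
    rw [e]; exact this
  refine h.congr_deriv (Eq.symm ?_)
  ring

lemma kAux_deriv : deriv kAux =
    fun θ => 4 * (Real.cos θ ^ 2 - Real.sin θ ^ 2) + 6 - 3 * π * Real.cos θ :=
  funext fun θ => (kAux_hasDerivAt θ).deriv

lemma kAux_deriv_hasDerivAt (θ : ℝ) :
    HasDerivAt (fun θ => 4 * (Real.cos θ ^ 2 - Real.sin θ ^ 2) + 6 - 3 * π * Real.cos θ)
      (Real.sin θ * (3 * π - 16 * Real.cos θ)) θ := by
  have hc : HasDerivAt (fun x : ℝ => Real.cos x ^ 2)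
      ((2 : ℕ) * Real.cos θ ^ 1 * (-Real.sin θ)) θ := (Real.hasDerivAt_cos θ).pow 2
  have hs : HasDerivAt (fun x : ℝ => Real.sin x ^ 2)
      ((2 : ℕ) * Real.sin θ ^ 1 * Real.cos θ) θ := (Real.hasDerivAt_sin θ).pow 2
  have h1 : HasDerivAt (fun x : ℝ => 4 * (Real.cos x ^ 2 - Real.sin x ^ 2))
      (4 * ((2 : ℕ) * Real.cos θ ^ 1 * (-Real.sin θ) - (2 : ℕ) * Real.sin θ ^ 1 * Real.cos θ)) θ :=
    (hc.sub hs).const_mul 4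
  have h2 : HasDerivAt (fun x : ℝ => 3 * π * Real.cos x) (3 * π * (-Real.sin θ)) θ :=
    (Real.hasDerivAt_cos θ).const_mul (3 * π)
  have := (h1.add_const 6).sub h2
  refine this.congr_deriv (Eq.symm ?_)
  push_cast
  ring

lemma kAux_deriv2 (θ : ℝ) :
    deriv (deriv kAux) θ = Real.sin θ * (3 * π - 16 * Real.cos θ) := by
  rw [kAux_deriv]
  exact (kAux_deriv_hasDerivAt θ).deriv

lemma kAux_differentiable : Differentiable ℝ kAux :=
  fun θ => (kAux_hasDerivAt θ).differentiableAt

lemma kAux_deriv_differentiable : Differentiable ℝ (deriv kAux) := by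
  rw [kAux_deriv]
  exact fun θ => (kAux_deriv_hasDerivAt θ).differentiableAt

lemma pi16 : -1 ≤ 3 * π / 16 ∧ 3 * π / 16 ≤ 1 := by
  constructor <;> nlinarith [Real.pi_gt_d6, Real.pi_lt_d6]

lemma cos_c0 : Real.cos c0 = 3 * π / 16 :=
  Real.cos_arccos pi16.1 pi16.2

lemma c0_nonneg : 0 ≤ c0 := Real.arccos_nonneg _

lemma c0_le_pi : c0 ≤ π := Real.arccos_le_pi _

lemma c0_lt : c0 < 0.945 := by
  have key : Real.cos 0.945 < 3 * π / 16 := by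
    have h2 : (0.945 : ℝ) = 2 * 0.4725 := by norm_num
    rw [h2, Real.cos_two_mul]
    have hb := Real.cos_bound (x := 0.4725) (by rw [abs_of_pos] <;> norm_num)
    rw [abs_le, abs_of_pos (by norm_num : (0:ℝ) < 0.4725)] at hb
    have hub : Real.cos 0.4725 ≤ 1 - 0.4725 ^ 2 / 2 + 0.4725 ^ 4 * (5 / 96) := by linarith [hb.2]
    have hnn : 0 ≤ Real.cos 0.4725 := by
      apply le_of_lt
      apply Real.cos_pos_of_mem_Ioo
      constructor <;> nlinarith [Real.pi_gt_d6]
    nlinarith [Real.pi_gt_d6]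
  by_contra hcon
  push_neg at hcon
  have := Real.cos_le_cos_of_nonneg_of_le_pi (by norm_num) c0_le_pi hcon
  rw [cos_c0] at this
  linarith

lemma c0_lt_pi_div_two : c0 < π / 2 := by
  have := Real.pi_gt_d6
  calc c0 < 0.945 := c0_lt
    _ < π / 2 := by linarith

lemma sin_c0_ge : 0.808 ≤ Real.sin c0 := by
  rw [c0, Real.sin_arccos]
  rw [Real.le_sqrt (by norm_num) (by nlinarith [Real.pi_lt_d6, Real.pi_pos])]
  nlinarith [Real.pi_gt_d6, Real.pi_lt_d6]

lemma kAux_c0_neg : kAux c0 < 0 := by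
  have hs := sin_c0_ge
  have hc := cos_c0
  have h945 := c0_lt
  rw [kAux, hc]
  nlinarith [Real.pi_gt_d6]

lemma kAux_zero : kAux 0 = 0 := by simp [kAux]

lemma kAux_pi_div_two : kAux (π / 2) = 0 := by
  simp [kAux, Real.sin_pi_div_two, Real.cos_pi_div_two]
  ring

lemma kAux_concave : ConcaveOn ℝ (Set.Icc 0 c0) kAux := by
  apply concaveOn_of_deriv2_nonpos (convex_Icc _ _)
    kAux_differentiable.continuous.continuousOn
    kAux_differentiable.differentiableOn
    kAux_deriv_differentiable.differentiableOn
  intro x hx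
  rw [interior_Icc] at hx
  have h2 : deriv^[2] kAux x = Real.sin x * (3 * π - 16 * Real.cos x) := by
    simp only [Function.iterate_succ, Function.iterate_zero, Function.comp_apply, id_eq]
    exact kAux_deriv2 x
  rw [h2]
  have hsin : 0 ≤ Real.sin x :=
    Real.sin_nonneg_of_nonneg_of_le_pi hx.1.le (le_trans (le_trans hx.2.le c0_le_pi) le_rfl)
  have hcos : 3 * π / 16 ≤ Real.cos x := by
    have := Real.cos_le_cos_of_nonneg_of_le_pi hx.1.le c0_le_pi hx.2.le
    rwa [cos_c0] at this
  nlinarith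

lemma kAux_convex : ConvexOn ℝ (Set.Icc c0 (π / 2)) kAux := by
  apply convexOn_of_deriv2_nonneg (convex_Icc _ _)
    kAux_differentiable.continuous.continuousOn
    kAux_differentiable.differentiableOn
    kAux_deriv_differentiable.differentiableOn
  intro x hx
  rw [interior_Icc] at hx
  have h2 : deriv^[2] kAux x = Real.sin x * (3 * π - 16 * Real.cos x) := by
    simp only [Function.iterate_succ, Function.iterate_zero, Function.comp_apply, id_eq]
    exact kAux_deriv2 x
  rw [h2]
  have hx0 : 0 < x := lt_of_le_of_lt c0_nonneg hx.1
  have hsin : 0 ≤ Real.sin x := by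
    apply Real.sin_nonneg_of_nonneg_of_le_pi hx0.le
    have := Real.pi_pos
    linarith [hx.2]
  have hcos : Real.cos x ≤ 3 * π / 16 := by
    have := Real.cos_le_cos_of_nonneg_of_le_pi c0_nonneg (by linarith [Real.pi_pos, hx.2.le]) hx.1.le
    rwa [cos_c0] at this
  nlinarith

/-- k is strictly negative on (c0, π/2) -/
lemma kAux_neg_of_gt {z : ℝ} (h1 : c0 < z) (h2 : z < π / 2) : kAux z < 0 := by
  have hd : (0:ℝ) < π / 2 - c0 := by linarith [c0_lt_pi_div_two]
  set a : ℝ := (π / 2 - z) / (π / 2 - c0) with ha_def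
  set b : ℝ := (z - c0) / (π / 2 - c0) with hb_def
  have ha : 0 < a := div_pos (by linarith) hd
  have hb : 0 < b := div_pos (by linarith) hd
  have hab : a + b = 1 := by
    rw [ha_def, hb_def, ← add_div, div_eq_one_iff_eq hd.ne']; ring
  have hpt : a • c0 + b • (π / 2) = z := by
    show (π / 2 - z) / (π / 2 - c0) * c0 + (z - c0) / (π / 2 - c0) * (π / 2) = z
    rw [div_mul_eq_mul_div, div_mul_eq_mul_div, ← add_div, div_eq_iff hd.ne']
    ring
  have := kAux_convex.2 (Set.left_mem_Icc.mpr c0_lt_pi_div_two.le)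
    (Set.right_mem_Icc.mpr c0_lt_pi_div_two.le) ha.le hb.le hab
  rw [hpt] at this
  have hkc0 := kAux_c0_neg
  have hk2 := kAux_pi_div_two
  simp only [smul_eq_mul] at this
  rw [hk2] at this
  nlinarith

lemma hAux_hasDerivAt (θ : ℝ) :
    HasDerivAt hAux (Real.sin θ * Real.cos θ * kAux θ) θ := by
  have h1 : HasDerivAt (fun x : ℝ => Real.sin x * Real.cos x * (1 + Real.sin x ^ 2))
      ((Real.cos θ * Real.cos θ + Real.sin θ * (-Real.sin θ)) * (1 + Real.sin θ ^ 2)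
        + Real.sin θ * Real.cos θ * ((2:ℕ) * Real.sin θ ^ 1 * Real.cos θ)) θ := by
    exact ((Real.hasDerivAt_sin θ).mul (Real.hasDerivAt_cos θ)).mul
      (((Real.hasDerivAt_sin θ).pow 2).const_add 1)
  have h2 : HasDerivAt (fun x : ℝ => x * (3 * Real.sin x ^ 2 - 1))
      (1 * (3 * Real.sin θ ^ 2 - 1) + θ * (3 * ((2:ℕ) * Real.sin θ ^ 1 * Real.cos θ))) θ := by
    have hinner : HasDerivAt (fun x : ℝ => 3 * Real.sin x ^ 2 - 1)
        (3 * ((2:ℕ) * Real.sin θ ^ 1 * Real.cos θ)) θ :=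
      (((Real.hasDerivAt_sin θ).pow 2).const_mul 3).sub_const 1
    exact (hasDerivAt_id θ).mul hinner
  have h3 : HasDerivAt (fun x : ℝ => π * Real.sin x ^ 3)
      (π * ((3:ℕ) * Real.sin θ ^ 2 * Real.cos θ)) θ :=
    ((Real.hasDerivAt_sin θ).pow 3).const_mul π
  have hraw := (h1.add h2).sub h3
  refine hraw.congr_deriv (Eq.symm ?_)
  have hpyth := Real.sin_sq_add_cos_sq θ
  rw [kAux]
  push_cast
  nlinarith [hpyth, sq_nonneg (Real.sin θ), sq_nonneg (Real.cos θ)]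

lemma hAux_differentiable : Differentiable ℝ hAux :=
  fun θ => (hAux_hasDerivAt θ).differentiableAt

lemma hAux_deriv (θ : ℝ) : deriv hAux θ = Real.sin θ * Real.cos θ * kAux θ :=
  (hAux_hasDerivAt θ).deriv

lemma hAux_zero : hAux 0 = 0 := by simp [hAux]

lemma hAux_pi_div_two : hAux (π / 2) = 0 := by
  simp [hAux, Real.sin_pi_div_two, Real.cos_pi_div_two]
  ring

/-- The key positivity: h > 0 on (0, π/2). -/
lemma hAux_pos {x : ℝ} (hx : x ∈ Set.Ioo 0 (π / 2)) : 0 < hAux x := by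
  obtain ⟨hx0, hx2⟩ := hx
  have hpi := Real.pi_pos
  by_cases hcase : ∃ z, x ≤ z ∧ z ≤ c0 ∧ 0 < kAux z
  · -- k > 0 on (0, x), so h is strictly increasing on [0, x]
    obtain ⟨z, hxz, hzc0, hkz⟩ := hcase
    have hz0 : 0 < z := lt_of_lt_of_le hx0 hxz
    have hkpos : ∀ y, 0 < y → y < x → 0 < kAux y := by
      intro y hy0 hyx
      have hyz : y < z := lt_of_lt_of_le hyx hxz
      set a : ℝ := 1 - y / z with ha_def
      set b : ℝ := y / z with hb_def
      have hb : 0 < b := div_pos hy0 hz0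
      have ha : 0 ≤ a := by
        have : y / z ≤ 1 := (div_le_one hz0).mpr hyz.le
        linarith
      have hab : a + b = 1 := by ring
      have hpt : a • (0:ℝ) + b • z = y := by
        simp only [smul_eq_mul, mul_zero, zero_add, hb_def]
        field_simp
      have hmem0 : (0:ℝ) ∈ Set.Icc 0 c0 := Set.left_mem_Icc.mpr c0_nonneg
      have hmemz : z ∈ Set.Icc 0 c0 := ⟨hz0.le, hzc0⟩
      have := kAux_concave.2 hmem0 hmemz ha hb.le hab
      rw [hpt] at this
      simp only [smul_eq_mul, kAux_zero, mul_zero, zero_add] at this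
      nlinarith
    have hsm : StrictMonoOn hAux (Set.Icc 0 x) := by
      apply strictMonoOn_of_deriv_pos (convex_Icc _ _)
        hAux_differentiable.continuous.continuousOn
      intro y hy
      rw [interior_Icc] at hy
      rw [hAux_deriv]
      have hy2 : y < π / 2 := lt_trans hy.2 hx2
      have hsin : 0 < Real.sin y := Real.sin_pos_of_pos_of_lt_pi hy.1 (by linarith)
      have hcos : 0 < Real.cos y := Real.cos_pos_of_mem_Ioo ⟨by linarith [hy.1], hy2⟩
      exact mul_pos (mul_pos hsin hcos) (hkpos y hy.1 hy.2)
    have := hsm (Set.left_mem_Icc.mpr hx0.le) (Set.right_mem_Icc.mpr hx0.le) hx0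
    rwa [hAux_zero] at this
  · -- k ≤ 0 on [x, c0] and k < 0 on (c0, π/2); h is antitone on [x, π/2]
    push_neg at hcase
    set m : ℝ := max x c0 with hm_def
    have hm2 : m < π / 2 := max_lt hx2 c0_lt_pi_div_two
    have hm0 : 0 < m := lt_of_lt_of_le hx0 (le_max_left _ _)
    have hknp : ∀ z, x < z → z < π / 2 → kAux z ≤ 0 := by
      intro z hxz hz2
      rcases le_or_gt z c0 with hzc0 | hzc0
      · exact hcase z hxz.le hzc0
      · exact (kAux_neg_of_gt hzc0 hz2).le
    have hanti : AntitoneOn hAux (Set.Icc x (π / 2)) := by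
      apply antitoneOn_of_deriv_nonpos (convex_Icc _ _)
        hAux_differentiable.continuous.continuousOn
        hAux_differentiable.differentiableOn
      intro z hz
      rw [interior_Icc] at hz
      rw [hAux_deriv]
      have hz0 : 0 < z := lt_trans hx0 hz.1
      have hsin : 0 ≤ Real.sin z := Real.sin_nonneg_of_nonneg_of_le_pi hz0.le (by linarith [hz.2])
      have hcos : 0 ≤ Real.cos z := (Real.cos_pos_of_mem_Ioo ⟨by linarith, hz.2⟩).le
      exact mul_nonpos_of_nonneg_of_nonpos (mul_nonneg hsin hcos) (hknp z hz.1 hz.2)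
    have hsanti : StrictAntiOn hAux (Set.Icc m (π / 2)) := by
      apply strictAntiOn_of_deriv_neg (convex_Icc _ _)
        hAux_differentiable.continuous.continuousOn
      intro z hz
      rw [interior_Icc] at hz
      rw [hAux_deriv]
      have hz0 : 0 < z := lt_trans hm0 hz.1
      have hsin : 0 < Real.sin z := Real.sin_pos_of_pos_of_lt_pi hz0 (by linarith [hz.2])
      have hcos : 0 < Real.cos z := Real.cos_pos_of_mem_Ioo ⟨by linarith, hz.2⟩
      have hkz : kAux z < 0 := kAux_neg_of_gt (lt_of_le_of_lt (le_max_right x c0) hz.1) hz.2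
      exact mul_neg_of_pos_of_neg (mul_pos hsin hcos) hkz
    have h1 : hAux m ≤ hAux x := by
      apply hanti (Set.left_mem_Icc.mpr (by linarith)) ⟨le_max_left _ _, hm2.le⟩ (le_max_left _ _)
    have h2 : hAux (π / 2) < hAux m := by
      apply hsanti (Set.left_mem_Icc.mpr hm2.le) (Set.right_mem_Icc.mpr hm2.le) hm2
    rw [hAux_pi_div_two] at h2
    linarith

lemma f1_hasDerivAt {x : ℝ} (hx : x ∈ Set.Ioo 0 (π / 2)) :
    HasDerivAt (fun θ : ℝ => (θ / Real.sin θ + Real.cos θ - π / 2) / Real.cos θ ^ 2)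
      (hAux x / (Real.sin x ^ 2 * Real.cos x ^ 3)) x := by
  obtain ⟨hx0, hx2⟩ := hx
  have hpi := Real.pi_pos
  have hsin : 0 < Real.sin x := Real.sin_pos_of_pos_of_lt_pi hx0 (by linarith)
  have hcos : 0 < Real.cos x := Real.cos_pos_of_mem_Ioo ⟨by linarith, hx2⟩
  have hs : Real.sin x ≠ 0 := ne_of_gt hsin
  have hc : Real.cos x ≠ 0 := ne_of_gt hcos
  have hc2 : Real.cos x ^ 2 ≠ 0 := pow_ne_zero 2 hc
  have hu : HasDerivAt (fun θ : ℝ => θ / Real.sin θ + Real.cos θ - π / 2)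
      ((1 * Real.sin x - x * Real.cos x) / Real.sin x ^ 2 + (-Real.sin x)) x :=
    (((hasDerivAt_id x).div (Real.hasDerivAt_sin x) hs).add (Real.hasDerivAt_cos x)).sub_const (π / 2)
  have hv : HasDerivAt (fun θ : ℝ => Real.cos θ ^ 2)
      ((2:ℕ) * Real.cos x ^ 1 * (-Real.sin x)) x := (Real.hasDerivAt_cos x).pow 2
  have hdiv := hu.div hv hc2
  refine hdiv.congr_deriv (Eq.symm ?_)
  rw [hAux]
  have hpyth := Real.sin_sq_add_cos_sq x
  field_simp
  push_cast
  linear_combination (2 * x) * hpyth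

theorem f1_strictMono :
    StrictMonoOn (fun θ : ℝ => (θ / Real.sin θ + Real.cos θ - π / 2) / Real.cos θ ^ 2)
      (Set.Ioo 0 (π / 2)) := by
  apply strictMonoOn_of_deriv_pos (convex_Ioo _ _)
  · intro x hx
    exact (f1_hasDerivAt hx).continuousAt.continuousWithinAt
  · intro x hx
    rw [interior_Ioo] at hx
    rw [(f1_hasDerivAt hx).deriv]
    obtain ⟨hx0, hx2⟩ := hx
    have hpi := Real.pi_pos
    have hsin : 0 < Real.sin x := Real.sin_pos_of_pos_of_lt_pi hx0 (by linarith)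
    have hcos : 0 < Real.cos x := Real.cos_pos_of_mem_Ioo ⟨by linarith, hx2⟩
    exact div_pos (hAux_pos ⟨hx0, hx2⟩) (by positivity)
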